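/- Let N ≥ 1 and let (D_i, I_i), i = 1,…,N, be independent and identically distributed pairs of {0,1}-valued random variables on a probability space with P(D_1 = 1) > 0. Then E[(Σ_{i=1}^N D_i·I_i)/(Σ_{i=1}^N D_i) | Σ_{i=1}^N D_i > 0] = P(I_1 = 1 | D_1 = 1). -/

import Mathlib

open MeasureTheory ProbabilityTheory

private lemma intg_of_bdd {Ω : Type*} [MeasurableSpace Ω] {μ : Measure Ω}
    [IsProbabilityMeasure μ] {f : Ω → ℝ} (hf : Measurable f) (C : ℝ)
    (h : ∀ ω, |f ω| ≤ C) : Integrable f μ :=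
  (memLp_top_of_bound hf.aestronglyMeasurable C (Filter.Eventually.of_forall h)).integrable le_top

set_option maxHeartbeats 1600000 in
theorem stmt1
    {Ω : Type*} [MeasurableSpace Ω] (μ : Measure Ω) [IsProbabilityMeasure μ]
    (N : ℕ) (hN : 0 < N)
    (D I : Fin N → Ω → ℝ)
    (hDmeas : ∀ i, Measurable (D i)) (hImeas : ∀ i, Measurable (I i))
    (hD01 : ∀ i ω, D i ω = 0 ∨ D i ω = 1)
    (hI01 : ∀ i ω, I i ω = 0 ∨ I i ω = 1)
    (hindep : iIndepFun (fun i ω => (D i ω, I i ω)) μ)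
    (hident : ∀ i j, IdentDistrib (fun ω => (D i ω, I i ω))
      (fun ω => (D j ω, I j ω)) μ μ)
    (hD1 : 0 < μ {ω | D ⟨0, hN⟩ ω = 1}) :
    (∫ ω, (∑ i, D i ω * I i ω) / (∑ i, D i ω)
        ∂(μ[|{ω | 0 < ∑ i, D i ω}]))
      = (μ[|{ω | D ⟨0, hN⟩ ω = 1}] {ω | I ⟨0, hN⟩ ω = 1}).toReal := by
  classical
  set i0 : Fin N := ⟨0, hN⟩ with hi0
  set E : Set Ω := {ω | 0 < ∑ i, D i ω} with hEdef
  set A : Set Ω := {ω | D i0 ω = 1} with hAdef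
  set B : Set Ω := {ω | I i0 ω = 1} with hBdef
  have hDnn : ∀ i ω, 0 ≤ D i ω := fun i ω => by
    rcases hD01 i ω with h | h <;> simp [h]
  have hSmeas : Measurable (fun ω => ∑ i, D i ω) :=
    Finset.measurable_sum _ (fun i _ => hDmeas i)
  have hEmeas : MeasurableSet E := measurableSet_lt measurable_const hSmeas
  have hAmeas : MeasurableSet A := hDmeas i0 (measurableSet_singleton 1)
  -- the auxiliary functions g i = (1 + ∑_{j≠i} D_j)⁻¹
  set g : Fin N → Ω → ℝ :=
    fun i ω => (1 + ∑ j : (({i}ᶜ : Finset (Fin N)) : Finset (Fin N)), D j ω)⁻¹ with hgdef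
  have hsum_nn : ∀ i ω, 0 ≤ ∑ j : (({i}ᶜ : Finset (Fin N)) : Finset (Fin N)), D j ω :=
    fun i ω => Finset.sum_nonneg fun j _ => hDnn j ω
  have hgpos : ∀ i ω, 0 < 1 + ∑ j : (({i}ᶜ : Finset (Fin N)) : Finset (Fin N)), D j ω :=
    fun i ω => by linarith [hsum_nn i ω]
  have hgmeas : ∀ i, Measurable (g i) := fun i =>
    (measurable_const.add (Finset.measurable_sum Finset.univ
      (fun (j : (({i}ᶜ : Finset (Fin N)) : Finset (Fin N))) _ => hDmeas j))).inv
  have hgbd : ∀ i ω, |g i ω| ≤ 1 := by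
    intro i ω
    rw [abs_of_nonneg (le_of_lt (inv_pos.2 (hgpos i ω)))]
    rw [inv_le_one_iff₀]
    right; linarith [hsum_nn i ω]
  -- splitting the sum
  have hsplit : ∀ (i : Fin N) ω, D i ω = 1 →
      (∑ j, D j ω) = 1 + ∑ j : (({i}ᶜ : Finset (Fin N)) : Finset (Fin N)), D j ω := by
    intro i ω h1
    have hcs := Finset.sum_coe_sort ({i}ᶜ : Finset (Fin N)) (fun j => D j ω)
    rw [hcs, ← Finset.sum_compl_add_sum {i} (fun j => D j ω), Finset.sum_singleton, h1, add_comm]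
  -- pointwise identities
  have key1 : ∀ (i : Fin N) ω,
      D i ω * I i ω / (∑ j, D j ω) = (D i ω * I i ω) * g i ω := by
    intro i ω
    rcases hD01 i ω with h | h
    · simp [h]
    · rcases hI01 i ω with h' | h'
      · simp [h']
      · rw [hsplit i ω h, h, h']
        simp [hgdef, div_eq_mul_inv]
  have key2 : ∀ (i : Fin N) ω,
      D i ω / (∑ j, D j ω) = D i ω * g i ω := by
    intro i ω
    rcases hD01 i ω with h | h
    · simp [h]
    · rw [hsplit i ω h, h]
      simp [hgdef, div_eq_mul_inv]
  -- independence of (D i * I i) (resp. D i) and g i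
  have hindepDI : ∀ i : Fin N, IndepFun (fun ω => D i ω * I i ω) (g i) μ := by
    intro i
    have h1 := hindep.indepFun_finset {i} {i}ᶜ disjoint_compl_right
      (fun j => (hDmeas j).prodMk (hImeas j))
    have hφ : Measurable (fun v : (({i} : Finset (Fin N)) : Finset (Fin N)) → ℝ × ℝ =>
        (v ⟨i, Finset.mem_singleton_self i⟩).1 * (v ⟨i, Finset.mem_singleton_self i⟩).2) :=
      ((measurable_pi_apply _).fst).mul ((measurable_pi_apply _).snd)
    have hψ : Measurable (fun v : (({i}ᶜ : Finset (Fin N)) : Finset (Fin N)) → ℝ × ℝ =>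
        (1 + ∑ j : (({i}ᶜ : Finset (Fin N)) : Finset (Fin N)), (v j).1)⁻¹) :=
      (measurable_const.add (Finset.measurable_sum _
        (fun j _ => (measurable_pi_apply j).fst))).inv
    exact h1.comp hφ hψ
  have hindepD : ∀ i : Fin N, IndepFun (D i) (g i) μ := by
    intro i
    have h1 := hindep.indepFun_finset {i} {i}ᶜ disjoint_compl_right
      (fun j => (hDmeas j).prodMk (hImeas j))
    have hφ : Measurable (fun v : (({i} : Finset (Fin N)) : Finset (Fin N)) → ℝ × ℝ =>
        (v ⟨i, Finset.mem_singleton_self i⟩).1) :=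
      (measurable_pi_apply _).fst
    have hψ : Measurable (fun v : (({i}ᶜ : Finset (Fin N)) : Finset (Fin N)) → ℝ × ℝ =>
        (1 + ∑ j : (({i}ᶜ : Finset (Fin N)) : Finset (Fin N)), (v j).1)⁻¹) :=
      (measurable_const.add (Finset.measurable_sum _
        (fun j _ => (measurable_pi_apply j).fst))).inv
    exact h1.comp hφ hψ
  -- constants
  set a : ℝ := ∫ ω, D i0 ω * I i0 ω ∂μ with hadef
  set b : ℝ := ∫ ω, D i0 ω ∂μ with hbdef
  set c : ℝ := ∑ i, ∫ ω, g i ω ∂μ with hcdef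
  have ha : ∀ i : Fin N, ∫ ω, D i ω * I i ω ∂μ = a := fun i =>
    ((hident i i0).comp (measurable_fst.mul measurable_snd)).integral_eq
  have hb : ∀ i : Fin N, ∫ ω, D i ω ∂μ = b := fun i =>
    ((hident i i0).comp measurable_fst).integral_eq
  -- integrability
  have hIntDIg : ∀ i : Fin N, Integrable (fun ω => D i ω * I i ω * g i ω) μ := by
    intro i
    refine intg_of_bdd (((hDmeas i).mul (hImeas i)).mul (hgmeas i)) 1 (fun ω => ?_)
    rw [abs_mul, abs_mul]
    have h1 : |D i ω| ≤ 1 := by rcases hD01 i ω with h | h <;> simp [h]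
    have h2 : |I i ω| ≤ 1 := by rcases hI01 i ω with h | h <;> simp [h]
    have h3 := hgbd i ω
    have := mul_le_mul (mul_le_mul h1 h2 (abs_nonneg _) zero_le_one) h3 (abs_nonneg _)
      (by norm_num : (0:ℝ) ≤ 1 * 1)
    simpa using this
  have hIntDg : ∀ i : Fin N, Integrable (fun ω => D i ω * g i ω) μ := by
    intro i
    refine intg_of_bdd ((hDmeas i).mul (hgmeas i)) 1 (fun ω => ?_)
    rw [abs_mul]
    have h1 : |D i ω| ≤ 1 := by rcases hD01 i ω with h | h <;> simp [h]
    have h3 := hgbd i ω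
    have := mul_le_mul h1 h3 (abs_nonneg _) zero_le_one
    simpa using this
  -- main integral : ∫ T/S = a * c
  have hfeq : (fun ω => (∑ i, D i ω * I i ω) / (∑ i, D i ω))
      = fun ω => ∑ i, D i ω * I i ω * g i ω := by
    funext ω
    rw [Finset.sum_div]
    exact Finset.sum_congr rfl fun i _ => key1 i ω
  have hTS : ∫ ω, (∑ i, D i ω * I i ω) / (∑ i, D i ω) ∂μ = a * c := by
    rw [hfeq, integral_finset_sum _ (fun i _ => hIntDIg i)]
    rw [hcdef, Finset.mul_sum]
    refine Finset.sum_congr rfl fun i _ => ?_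
    have hm := (hindepDI i).integral_fun_mul_eq_mul_integral (((hDmeas i).mul (hImeas i)).aestronglyMeasurable)
      ((hgmeas i).aestronglyMeasurable)
    rw [ha i] at hm
    exact hm
  -- the probability of E : (μ E).toReal = b * c
  have hindic : ∀ ω, E.indicator (fun _ => (1 : ℝ)) ω = ∑ i, D i ω * g i ω := by
    intro ω
    rw [Set.indicator_apply]
    have : (∑ i, D i ω) / (∑ i, D i ω) = ∑ i, D i ω * g i ω := by
      rw [Finset.sum_div]
      exact Finset.sum_congr rfl fun i _ => key2 i ω
    by_cases hω : ω ∈ E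
    · rw [if_pos hω, ← this, div_self (ne_of_gt hω)]
    · have hS0 : (∑ i, D i ω) = 0 := by
        have h1 : ¬ 0 < ∑ i, D i ω := hω
        have h2 : 0 ≤ ∑ i, D i ω := Finset.sum_nonneg fun i _ => hDnn i ω
        linarith [not_lt.1 h1]
      rw [if_neg hω, ← this, hS0, div_zero]
  have hPE : (μ E).toReal = b * c := by
    have h1 : (μ E).toReal = ∫ ω, E.indicator (fun _ => (1 : ℝ)) ω ∂μ := by
      rw [integral_indicator_const (1 : ℝ) hEmeas]; simp; rfl
    rw [h1, integral_congr_ae (Filter.Eventually.of_forall hindic),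
      integral_finset_sum _ (fun i _ => hIntDg i), hcdef, Finset.mul_sum]
    refine Finset.sum_congr rfl fun i _ => ?_
    have hm := (hindepD i).integral_fun_mul_eq_mul_integral ((hDmeas i).aestronglyMeasurable)
      ((hgmeas i).aestronglyMeasurable)
    rw [hb i] at hm
    exact hm
  -- positivity
  have hAE : A ⊆ E := by
    intro ω hω
    have hω' : D i0 ω = 1 := hω
    have h2 : D i0 ω ≤ ∑ i, D i ω :=
      Finset.single_le_sum (f := fun i => D i ω) (fun i _ => hDnn i ω) (Finset.mem_univ i0)
    have : (0:ℝ) < ∑ i, D i ω := by rw [hω'] at h2; linarith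
    exact this
  have hμE : 0 < (μ E).toReal :=
    ENNReal.toReal_pos (ne_of_gt (lt_of_lt_of_le hD1 (measure_mono hAE))) (measure_ne_top μ E)
  -- b and a as measures
  have hbA : b = (μ A).toReal := by
    have : (fun ω => D i0 ω) = A.indicator (fun _ => (1 : ℝ)) := by
      funext ω
      rcases hD01 i0 ω with h | h <;>
        simp [Set.indicator_apply, hAdef, Set.mem_setOf_eq, h]
    rw [hbdef, this, integral_indicator_const (1 : ℝ) hAmeas]; simp; rfl
  have haAB : a = (μ (A ∩ B)).toReal := by
    have hABmeas : MeasurableSet (A ∩ B) :=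
      hAmeas.inter (hImeas i0 (measurableSet_singleton 1))
    have : (fun ω => D i0 ω * I i0 ω) = (A ∩ B).indicator (fun _ => (1 : ℝ)) := by
      funext ω
      rcases hD01 i0 ω with h | h <;> rcases hI01 i0 ω with h' | h' <;>
        simp [Set.indicator_apply, hAdef, hBdef, Set.mem_setOf_eq, h, h']
    rw [hadef, this, integral_indicator_const (1 : ℝ) hABmeas]; simp; rfl
  -- conditional integral
  have hIntf : Integrable (fun ω => (∑ i, D i ω * I i ω) / (∑ i, D i ω)) μ := by
    rw [hfeq]; exact integrable_finset_sum _ (fun i _ => hIntDIg i)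
  have hcond : (∫ ω, (∑ i, D i ω * I i ω) / (∑ i, D i ω) ∂(μ[|E]))
      = (μ E).toReal⁻¹ * ∫ ω, (∑ i, D i ω * I i ω) / (∑ i, D i ω) ∂μ := by
    rw [ProbabilityTheory.cond, integral_smul_measure, ENNReal.toReal_inv, smul_eq_mul]
    congr 1
    have hcompl : ∫ ω in Eᶜ, (∑ i, D i ω * I i ω) / (∑ i, D i ω) ∂μ = 0 := by
      refine setIntegral_eq_zero_of_forall_eq_zero fun ω hω => ?_
      have h1 : ¬ 0 < ∑ i, D i ω := hω
      have h2 : 0 ≤ ∑ i, D i ω := Finset.sum_nonneg fun i _ => hDnn i ω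
      have hS0 : (∑ i, D i ω) = 0 := le_antisymm (not_lt.1 h1) h2
      rw [hS0, div_zero]
    have := integral_add_compl hEmeas hIntf
    rw [← this, hcompl, add_zero]
  -- put everything together
  rw [hcond, hTS, cond_apply hAmeas μ B, ENNReal.toReal_mul, ENNReal.toReal_inv,
    ← hbA, ← haAB, hPE]
  have hb0 : b ≠ 0 := by
    rw [hbA]
    exact ne_of_gt (ENNReal.toReal_pos (ne_of_gt hD1) (measure_ne_top μ A))
  have hc0 : c ≠ 0 := by
    intro h
    rw [h, mul_zero] at hPE
    rw [hPE] at hμE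
    exact lt_irrefl 0 hμE
  field_simp
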